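/- Let C be a k-linear dg-category with two objects 1 and 2 and path algebra A = A_C with idempotents e_1, e_2. Let C^f = C ⊔_{k⊔k} k be the pushout identifying the two objects. Then the endomorphism algebra of the unique object of C^f is isomorphic to the fusion algebra A^f = ε A⁺ ε, where A⁺ = A ⊔_{ke_1⊕ke_2} M_2(k) and ε = e_{11}. -/

import Mathlib

universe u

/-! ### Auxiliary: corner ring at an idempotent -/

/-- The corner ring `ε R ε` of a ring `R` at an idempotent `ε`. -/
def CornerRing {R : Type u} [Ring R] (ε : R) (_hε : ε * ε = ε) : Type u :=
  {z : R // ε * z * ε = z}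

namespace CornerRing

variable {R : Type u} [Ring R] {ε : R} {hε : ε * ε = ε}

instance : Add (CornerRing ε hε) :=
  ⟨fun a b => ⟨a.1 + b.1, by rw [mul_add, add_mul, a.2, b.2]⟩⟩
instance : Neg (CornerRing ε hε) :=
  ⟨fun a => ⟨-a.1, by rw [mul_neg, neg_mul, a.2]⟩⟩
instance : Zero (CornerRing ε hε) :=
  ⟨⟨0, by rw [mul_zero, zero_mul]⟩⟩
instance : Mul (CornerRing ε hε) :=
  ⟨fun a b => ⟨a.1 * b.1, by
    conv_lhs => rw [← a.2, ← b.2]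
    conv_rhs => rw [← a.2, ← b.2]
    simp only [← mul_assoc]
    rw [mul_assoc _ ε ε, hε, mul_assoc _ ε ε, hε]⟩⟩
instance : One (CornerRing ε hε) :=
  ⟨⟨ε, by rw [hε, hε]⟩⟩
instance {k : Type*} [CommSemiring k] [Algebra k R] : SMul k (CornerRing ε hε) :=
  ⟨fun c a => ⟨c • a.1, by rw [mul_smul_comm, smul_mul_assoc, a.2]⟩⟩

@[simp] lemma val_smul {k : Type*} [CommSemiring k] [Algebra k R] (c : k)
    (a : CornerRing ε hε) : (c • a).1 = c • a.1 := rfl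

@[simp] lemma val_add (a b : CornerRing ε hε) : (a + b).1 = a.1 + b.1 := rfl
@[simp] lemma val_mul (a b : CornerRing ε hε) : (a * b).1 = a.1 * b.1 := rfl
@[simp] lemma val_zero : (0 : CornerRing ε hε).1 = 0 := rfl
@[simp] lemma val_one : (1 : CornerRing ε hε).1 = ε := rfl
@[simp] lemma val_neg (a : CornerRing ε hε) : (-a).1 = -a.1 := rfl

lemma val_injective : Function.Injective (Subtype.val : CornerRing ε hε → R) :=
  Subtype.val_injective

lemma eps_mul (a : CornerRing ε hε) : ε * a.1 = a.1 := by
  conv_lhs => rw [← a.2]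
  rw [← mul_assoc, ← mul_assoc, hε, a.2]

lemma mul_eps (a : CornerRing ε hε) : a.1 * ε = a.1 := by
  conv_lhs => rw [← a.2]
  rw [mul_assoc, hε, a.2]

instance : Ring (CornerRing ε hε) where
  add_assoc a b c := val_injective (add_assoc a.1 b.1 c.1)
  zero_add a := val_injective (zero_add a.1)
  add_zero a := val_injective (add_zero a.1)
  add_comm a b := val_injective (add_comm a.1 b.1)
  neg_add_cancel a := val_injective (neg_add_cancel a.1)
  mul_assoc a b c := val_injective (mul_assoc a.1 b.1 c.1)
  one_mul a := val_injective (eps_mul a)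
  mul_one a := val_injective (mul_eps a)
  left_distrib a b c := val_injective (left_distrib a.1 b.1 c.1)
  right_distrib a b c := val_injective (right_distrib a.1 b.1 c.1)
  zero_mul a := val_injective (zero_mul a.1)
  mul_zero a := val_injective (mul_zero a.1)
  nsmul := nsmulRec
  zsmul := zsmulRec

variable {k : Type*} [CommSemiring k] [Algebra k R]

def valAddHom : CornerRing ε hε →+ R where
  toFun := Subtype.val
  map_zero' := rfl
  map_add' _ _ := rfl

instance : Module k (CornerRing ε hε) :=
  Function.Injective.module k (valAddHom : CornerRing ε hε →+ R) val_injective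
    (fun _ _ => rfl)

instance : Algebra k (CornerRing ε hε) :=
  Algebra.ofModule
    (fun c a b => val_injective (by simp [smul_mul_assoc]))
    (fun c a b => val_injective (by simp [mul_smul_comm]))

@[simp] lemma val_algebraMap (c : k) :
    (algebraMap k (CornerRing ε hε) c).1 = c • ε := rfl

/-- The inclusion of the corner ring, as a `k`-linear map. -/
def valLinearMap : CornerRing ε hε →ₗ[k] R where
  toFun := Subtype.val
  map_add' _ _ := rfl
  map_smul' _ _ := rfl

@[simp] lemma valLinearMap_apply (a : CornerRing ε hε) :
    (valLinearMap (k := k) a) = a.1 := rfl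

end CornerRing


section

variable {k : Type u} [Field k] {A : Type u} [Ring A] [Algebra k A]

/-- A `k`-linear functor from the two-object `k`-category `C` with path algebra `A`
(objects corresponding to idempotents `e₁, e₂`) to a one-object `k`-category with
endomorphism algebra `D`: a `k`-linear map on the path algebra sending both identities
to `1` and respecting composition. -/
def IsFunctorData (e1 e2 : A) {D : Type u} [Ring D] [Algebra k D]
    (F : A →ₗ[k] D) : Prop :=
  F e1 = 1 ∧ F e2 = 1 ∧
    (∀ a b : A, F (a * e1 * b) = F (a * e1) * F (e1 * b)) ∧
    (∀ a b : A, F (a * e2 * b) = F (a * e2) * F (e2 * b))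

/-- `B`, together with `u : A → B`, is the endomorphism algebra of the unique object of the
pushout `C^f = C ⊔_{k ⊔ k} k`: functors out of `C^f` (i.e. `k`-algebra maps out of `B`)
correspond exactly to functors out of `C`. -/
def IsFusionPushout (e1 e2 : A) (B : Type u) [Ring B] [Algebra k B]
    (u : A →ₗ[k] B) : Prop :=
  IsFunctorData e1 e2 u ∧
    ∀ (D : Type u) [Ring D] [Algebra k D] (F : A →ₗ[k] D),
      IsFunctorData e1 e2 F → ∃! h : B →ₐ[k] D, F = h.toLinearMap ∘ₗ u

end

set_option maxHeartbeats 1600000 in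
/-- Let `C` be a `k`-linear (dg-)category with two objects `1`, `2` and path algebra `A = A_C`
with idempotents `e₁, e₂`.  Let `C^f = C ⊔_{k⊔k} k` be the pushout identifying the two
objects.  Then the endomorphism algebra `B` of the unique object of `C^f` is isomorphic to
the fusion algebra `A^f = ε A⁺ ε`, where `A⁺ = A ⊔_{ke₁⊕ke₂} M₂(k)` and `ε = e₁₁`.

Both `B` and `A⁺` are characterized by their universal properties; the conclusion produces
an injective multiplicative `k`-linear map `ψ : B → A⁺` with unit `ε` and image the corner
`ε A⁺ ε`. -/
theorem fusion_pushout_is_fusion_algebra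
    {k : Type u} [Field k] [CharZero k] {A : Type u} [Ring A] [Algebra k A]
    (e1 e2 : A) (h1 : e1 * e1 = e1) (h2 : e2 * e2 = e2)
    (h12 : e1 * e2 = 0) (h21 : e2 * e1 = 0) (hsum : e1 + e2 = 1)
    -- `B = End_{C^f}(pt)`
    (B : Type u) [Ring B] [Algebra k B] (uB : A →ₗ[k] B)
    (hB : IsFusionPushout e1 e2 B uB)
    -- `A⁺ = A ⊔_{ke₁⊕ke₂} M₂(k)`, as a pushout of `k`-algebras
    (Ap : Type u) [Ring Ap] [Algebra k Ap]
    (jA : A →ₐ[k] Ap) (jM : Matrix (Fin 2) (Fin 2) k →ₐ[k] Ap)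
    (hcomp1 : jA e1 = jM (Matrix.single 0 0 1))
    (hcomp2 : jA e2 = jM (Matrix.single 1 1 1))
    (hAp : ∀ (D : Type u) [Ring D] [Algebra k D]
        (g1 : A →ₐ[k] D) (g2 : Matrix (Fin 2) (Fin 2) k →ₐ[k] D),
      g1 e1 = g2 (Matrix.single 0 0 1) → g1 e2 = g2 (Matrix.single 1 1 1) →
      ∃! h : Ap →ₐ[k] D, h.comp jA = g1 ∧ h.comp jM = g2) :
    ∃ ψ : B →ₗ[k] Ap,
      (∀ x y : B, ψ (x * y) = ψ x * ψ y) ∧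
      ψ 1 = jM (Matrix.single 0 0 1) ∧
      Function.Injective ψ ∧
      Set.range ψ = {z : Ap |
        jM (Matrix.single 0 0 1) * z * jM (Matrix.single 0 0 1) = z} := by
  classical
  obtain ⟨⟨hu1, hu2, hum1, hum2⟩, hBuniv⟩ := hB
  -- abbreviations for matrix units in `Ap`
  set E : Fin 2 → Fin 2 → Matrix (Fin 2) (Fin 2) k :=
    fun i j => Matrix.single i j 1 with hE
  -- product of matrix units
  have Emul : ∀ i j l m : Fin 2, E i j * E l m = if j = l then E i m else 0 := by
    intro i j l m
    by_cases h : j = l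
    · subst h; simp [hE]
    · rw [if_neg h]; exact Matrix.single_mul_single_of_ne (i := i) (j := j) (h := h) (c := 1) (d := 1) ..
  have Eone : (1 : Matrix (Fin 2) (Fin 2) k) = E 0 0 + E 1 1 := by
    ext i j
    fin_cases i <;> fin_cases j <;>
      simp [hE, Matrix.single, Matrix.one_apply]
  have jE : ∀ i j l m : Fin 2,
      jM (E i j) * jM (E l m) = if j = l then jM (E i m) else 0 := by
    intro i j l m
    rw [← map_mul, Emul]
    split_ifs <;> simp
  set ε := jM (E 0 0) with hεdef
  have hε : ε * ε = ε := by rw [jE]; simp; rfl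
  set σ := jM (E 0 0 + E 0 1) with hσdef
  set τ := jM (E 0 0 + E 1 0) with hτdef
  have hεσ : ε * σ = σ := by
    rw [hσdef, map_add, mul_add, hεdef, jE, jE]; simp
  have hτε : τ * ε = τ := by
    rw [hτdef, map_add, add_mul, hεdef, jE, jE]; simp
  have hco1 : jA e1 = jM (E 0 0) := hcomp1
  have hco2 : jA e2 = jM (E 1 1) := hcomp2
  -- key composition identities in `Ap`
  have key1 : ∀ x : Ap, x * jA e1 * τ * σ * jA e1 = x * jA e1 := by
    intro x
    rw [hco1, hτdef, hσdef]
    simp only [mul_assoc, ← map_mul]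
    congr 2
    simp [mul_add, add_mul, Emul]
  have key2 : ∀ x : Ap, x * jA e2 * τ * σ * jA e2 = x * jA e2 := by
    intro x
    rw [hco2, hτdef, hσdef]
    simp only [mul_assoc, ← map_mul]
    congr 2
    simp [mul_add, add_mul, Emul]
  have hFe1 : σ * jA e1 * τ = ε := by
    rw [hco1, hσdef, hτdef, hεdef, ← map_mul, ← map_mul]
    congr 1
    simp [mul_add, add_mul, Emul]
  have hFe2 : σ * jA e2 * τ = ε := by
    rw [hco2, hσdef, hτdef, hεdef, ← map_mul, ← map_mul]
    congr 1
    simp [mul_add, add_mul, Emul]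
  -- the corner ring
  have hmem : ∀ a : A, ε * (σ * jA a * τ) * ε = σ * jA a * τ := by
    intro a
    calc ε * (σ * jA a * τ) * ε = (ε * σ) * jA a * (τ * ε) := by
          simp only [mul_assoc]
      _ = σ * jA a * τ := by rw [hεσ, hτε]
  let F : A →ₗ[k] CornerRing ε hε :=
    { toFun := fun a => ⟨σ * jA a * τ, hmem a⟩
      map_add' := fun a b => CornerRing.val_injective
        (by simp [map_add, mul_add, add_mul]; rfl)
      map_smul' := fun c a => CornerRing.val_injective
        (by simp [map_smul, mul_smul_comm, smul_mul_assoc]; rfl) }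
  have hFval : ∀ a : A, (F a).1 = σ * jA a * τ := fun a => rfl
  have hFdata : IsFunctorData e1 e2 F := by
    refine ⟨CornerRing.val_injective ?_, CornerRing.val_injective ?_,
      fun a b => CornerRing.val_injective ?_, fun a b => CornerRing.val_injective ?_⟩
    · rw [hFval, CornerRing.val_one, hFe1]
    · rw [hFval, CornerRing.val_one, hFe2]
    · rw [CornerRing.val_mul, hFval, hFval, hFval]
      simp only [map_mul, ← mul_assoc]
      rw [key1 (σ * jA a)]
    · rw [CornerRing.val_mul, hFval, hFval, hFval]
      simp only [map_mul, ← mul_assoc]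
      rw [key2 (σ * jA a)]
  obtain ⟨h, hhF, hhuniq⟩ := hBuniv (CornerRing ε hε) F hFdata
  have hψu : ∀ a : A, (h (uB a)).1 = σ * jA a * τ := by
    intro a
    have := congrArg (fun G : A →ₗ[k] CornerRing ε hε => (G a).1) hhF
    simpa [hFval] using this.symm
  -- expansion of uB-multiplicativity over both idempotents
  have expand : ∀ x y : A, uB (x * y) = uB (x * e1) * uB (e1 * y) + uB (x * e2) * uB (e2 * y) := by
    intro x y
    rw [← hum1, ← hum2, ← map_add]
    congr 1
    rw [mul_assoc x e1 y, mul_assoc x e2 y, ← mul_add, ← add_mul, hsum, one_mul]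
  -- the algebra map A →ₐ M₂(B)
  let ee : Fin 2 → A := ![e1, e2]
  have eemul : ∀ i j : Fin 2, ee i * ee j = if i = j then ee i else 0 := by
    intro i j
    fin_cases i <;> fin_cases j <;> simp [ee, h1, h2, h12, h21]
  let g1 : A →ₐ[k] Matrix (Fin 2) (Fin 2) B :=
    { toFun := fun a => Matrix.of fun i j => uB (ee i * a * ee j)
      map_one' := by
        ext i j
        fin_cases i <;> fin_cases j <;>
          simp [ee, Matrix.one_apply, h1, h2, h12, h21, hu1, hu2]
      map_mul' := by
        intro a b
        ext i j
        simp only [Matrix.of_apply, Matrix.mul_apply, Fin.sum_univ_two]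
        rw [show ee i * (a * b) * ee j = (ee i * a) * (b * ee j) by noncomm_ring,
          expand]
        simp [ee, mul_assoc]
      map_zero' := by ext i j; simp
      map_add' := by
        intro a b
        ext i j
        simp [mul_add, add_mul, map_add]
      commutes' := by
        intro c
        ext i j
        fin_cases i <;> fin_cases j <;>
          simp [ee, Matrix.algebraMap_matrix_apply, Algebra.algebraMap_eq_smul_one,
            mul_smul_comm, smul_mul_assoc, h1, h2, h12, h21, hu1, hu2] }
  have hg1val : ∀ (a : A) (i j : Fin 2), g1 a i j = uB (ee i * a * ee j) := fun a i j => rfl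
  let g2 : Matrix (Fin 2) (Fin 2) k →ₐ[k] Matrix (Fin 2) (Fin 2) B :=
    (Algebra.ofId k B).mapMatrix
  have hg2val : ∀ (m : Matrix (Fin 2) (Fin 2) k) (i j : Fin 2),
      g2 m i j = algebraMap k B (m i j) := fun m i j => rfl
  have hg1 : g1 e1 = g2 (Matrix.single 0 0 1) := by
    ext i j
    fin_cases i <;> fin_cases j <;>
      simp [hg1val, hg2val, ee, Matrix.single, h1, h2, h12, h21, hu1, hu2]
  have hg2 : g1 e2 = g2 (Matrix.single 1 1 1) := by
    ext i j
    fin_cases i <;> fin_cases j <;>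
      simp [hg1val, hg2val, ee, Matrix.single, h1, h2, h12, h21, hu1, hu2]
  obtain ⟨h', ⟨h'A, h'M⟩, h'uniq⟩ := hAp (Matrix (Fin 2) (Fin 2) B) g1 g2 hg1 hg2
  have h'jA : ∀ a : A, h' (jA a) = g1 a := fun a => congrArg (fun G => G a) h'A
  have h'jM : ∀ m : Matrix (Fin 2) (Fin 2) k, h' (jM m) = g2 m :=
    fun m => congrArg (fun G => G m) h'M
  have hcorn : ∀ z : Ap, ε * z * ε = z →
      ∀ i j : Fin 2, h' z i j = if i = 0 ∧ j = 0 then h' z 0 0 else 0 := by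
    intro z hz i j
    conv_lhs => rw [← hz]
    rw [hεdef, map_mul, map_mul, h'jM]
    fin_cases i <;> fin_cases j <;>
      simp [hg2val, hE, Matrix.mul_apply, Fin.sum_univ_two, Matrix.single]
  have entry00 : ∀ X : Matrix (Fin 2) (Fin 2) B,
      (g2 (E 0 0 + E 0 1) * X * g2 (E 0 0 + E 1 0)) 0 0
        = X 0 0 + X 1 0 + (X 0 1 + X 1 1) := by
    intro X
    simp only [Matrix.mul_apply, Fin.sum_univ_two, hg2val, Matrix.add_apply, hE,
      Matrix.single, Matrix.of_apply]
    norm_num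
  have ρuB : ∀ a : A, h' (σ * jA a * τ) 0 0 = uB a := by
    intro a
    rw [map_mul, map_mul, h'jA, hσdef, hτdef, h'jM, h'jM, entry00,
      hg1val, hg1val, hg1val, hg1val, ← map_add, ← map_add, ← map_add]
    apply congrArg
    show e1 * a * e1 + e2 * a * e1 + (e1 * a * e2 + e2 * a * e2) = a
    have ha : (e1 + e2) * a * (e1 + e2) = a := by rw [hsum, one_mul, mul_one]
    conv_rhs => rw [← ha]
    noncomm_ring
  let δ : CornerRing ε hε →ₐ[k] B :=
    { toFun := fun d => h' d.1 0 0
      map_one' := by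
        show h' (1 : CornerRing ε hε).1 0 0 = 1
        rw [CornerRing.val_one, hεdef, h'jM]
        simp [hg2val, hE, Matrix.single]
      map_mul' := by
        intro d d'
        show h' (d * d').1 0 0 = h' d.1 0 0 * h' d'.1 0 0
        rw [CornerRing.val_mul, map_mul]
        have h10 := hcorn d'.1 d'.2 1 0
        simp only [Matrix.mul_apply, Fin.sum_univ_two]
        rw [h10]
        simp
      map_zero' := by
        show h' (0 : CornerRing ε hε).1 0 0 = 0
        simp
      map_add' := by
        intro d d'
        show h' (d + d').1 0 0 = h' d.1 0 0 + h' d'.1 0 0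
        rw [CornerRing.val_add, map_add]
        simp [Matrix.add_apply]
      commutes' := by
        intro c
        show h' (algebraMap k (CornerRing ε hε) c).1 0 0 = algebraMap k B c
        rw [CornerRing.val_algebraMap, map_smul, hεdef, h'jM]
        simp [hg2val, hE, Matrix.single, Algebra.algebraMap_eq_smul_one]
      }
  have hδval : ∀ d : CornerRing ε hε, δ d = h' d.1 0 0 := fun d => rfl
  have hδh : ∀ x : B, δ (h x) = x := by
    obtain ⟨h0, _, h0uniq⟩ := hBuniv B uB ⟨hu1, hu2, hum1, hum2⟩
    have c1 : uB = (δ.comp h).toLinearMap ∘ₗ uB := by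
      ext a
      show uB a = δ (h (uB a))
      rw [hδval, hψu, ρuB]
    have c2 : uB = (AlgHom.id k B).toLinearMap ∘ₗ uB := by ext a; rfl
    have e1' := h0uniq (δ.comp h) c1
    have e2' := h0uniq (AlgHom.id k B) c2
    intro x
    have : (δ.comp h) x = (AlgHom.id k B) x := by rw [e1', e2']
    simpa using this
  -- the candidate map ψ
  refine ⟨CornerRing.valLinearMap ∘ₗ h.toLinearMap, ?_, ?_, ?_, ?_⟩
  · intro x y
    simp [map_mul]
  · simp
  · intro x y hxy
    have hxy' : (h x).1 = (h y).1 := hxy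
    rw [← hδh x, ← hδh y, hδval, hδval, hxy']
  · -- range identification
    have ψval : ∀ x : B, (CornerRing.valLinearMap ∘ₗ h.toLinearMap) x = (h x).1 :=
      fun _ => rfl
    have ψmul : ∀ x y : B, (h (x * y)).1 = (h x).1 * (h y).1 := by
      intro x y; simp [map_mul]
    have ψone : (h (1 : B)).1 = ε := by simp
    have ψr : ∀ x : B, (h x).1 * ε = (h x).1 := fun x => CornerRing.mul_eps (h x)
    have ψl : ∀ x : B, ε * (h x).1 = (h x).1 := fun x => CornerRing.eps_mul (h x)
    have cross : ∀ (i l l' j : Fin 2) (x y : B),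
        (jM (E i 0) * (h x).1 * jM (E 0 l)) * (jM (E l' 0) * (h y).1 * jM (E 0 j))
          = if l = l' then jM (E i 0) * (h (x * y)).1 * jM (E 0 j) else 0 := by
      intro i l l' j x y
      by_cases hll : l = l'
      · subst hll
        rw [if_pos rfl, ψmul]
        have hll0 : jM (E 0 l) * jM (E l 0) = ε := by rw [jE, if_pos rfl, hεdef]
        simp only [mul_assoc]
        rw [← mul_assoc (jM (E 0 l)) (jM (E l 0)), hll0, ← mul_assoc ε, ψl]
      · rw [if_neg hll]
        have hll0 : jM (E 0 l) * jM (E l' 0) = 0 := by rw [jE, if_neg hll]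
        simp only [mul_assoc]
        rw [← mul_assoc (jM (E 0 l)) (jM (E l' 0)), hll0, zero_mul, mul_zero, mul_zero]
    have mid : ∀ i j : Fin 2, jM (E i 0) * ε * jM (E 0 j) = jM (E i j) := by
      intro i j
      rw [hεdef, jE, if_pos rfl, jE, if_pos rfl]
    let Ψ : Matrix (Fin 2) (Fin 2) B →ₐ[k] Ap :=
      { toFun := fun M => ∑ i, ∑ j, jM (E i 0) * (h (M i j)).1 * jM (E 0 j)
        map_one' := by
          show ∑ i, ∑ j, jM (E i 0) * (h ((1 : Matrix (Fin 2) (Fin 2) B) i j)).1 * jM (E 0 j) = 1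
          simp only [Fin.sum_univ_two, Matrix.one_apply]
          norm_num [ψone]
          rw [mid, mid, ← map_add, ← Eone, map_one]
        map_mul' := by
          intro M N
          show ∑ i, ∑ j, jM (E i 0) * (h ((M * N) i j)).1 * jM (E 0 j)
            = (∑ i, ∑ j, jM (E i 0) * (h (M i j)).1 * jM (E 0 j))
              * (∑ i, ∑ j, jM (E i 0) * (h (N i j)).1 * jM (E 0 j))
          simp only [Fin.sum_univ_two, Matrix.mul_apply, map_add, CornerRing.val_add,
            mul_add, add_mul]
          simp only [cross]
          norm_num
          abel
        map_zero' := by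
          show ∑ i : Fin 2, ∑ j : Fin 2,
            jM (E i 0) * (h ((0 : Matrix (Fin 2) (Fin 2) B) i j)).1 * jM (E 0 j) = 0
          simp
        map_add' := by
          intro M N
          show ∑ i, ∑ j, jM (E i 0) * (h ((M + N) i j)).1 * jM (E 0 j) = _
          simp only [Fin.sum_univ_two, Matrix.add_apply, map_add, CornerRing.val_add,
            mul_add, add_mul]
          abel
        commutes' := by
          intro c
          show ∑ i, ∑ j, jM (E i 0) * (h ((algebraMap k (Matrix (Fin 2) (Fin 2) B) c) i j)).1
              * jM (E 0 j) = algebraMap k Ap c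
          have hsm : ∀ i j : Fin 2, ((h (algebraMap k B c)).1) = c • ε := by
            intro i j
            rw [Algebra.algebraMap_eq_smul_one, map_smul, CornerRing.val_smul, ψone]
          simp only [Fin.sum_univ_two, Matrix.algebraMap_matrix_apply]
          norm_num [hsm 0 0, smul_mul_assoc, mul_smul_comm]
          rw [mid, mid, ← smul_add, ← map_add, ← Eone, map_one,
            ← Algebra.algebraMap_eq_smul_one] }
    have Ψval : ∀ M : Matrix (Fin 2) (Fin 2) B,
        Ψ M = ∑ i, ∑ j, jM (E i 0) * (h (M i j)).1 * jM (E 0 j) := fun _ => rfl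
    -- jA (ee i) = jM (E i i)
    have jee : ∀ i : Fin 2, jA (ee i) = jM (E i i) := by
      intro i; fin_cases i
      · exact hco1
      · exact hco2
    have lv : ∀ i : Fin 2, jM (E i 0) * σ * jA (ee i) = jM (E i i) := by
      intro i
      rw [jee, hσdef, ← map_mul, ← map_mul]
      congr 1
      fin_cases i <;> simp [mul_add, add_mul, Emul]
    have rv : ∀ j : Fin 2, jA (ee j) * τ * jM (E 0 j) = jM (E j j) := by
      intro j
      rw [jee, hτdef, ← map_mul, ← map_mul]
      congr 1
      fin_cases j <;> simp [mul_add, add_mul, Emul]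
    have term_eq : ∀ (i j : Fin 2) (x : A),
        jM (E i 0) * (h (uB (ee i * x * ee j))).1 * jM (E 0 j) = jA (ee i * x * ee j) := by
      intro i j x
      rw [hψu]
      simp only [map_mul]
      calc jM (E i 0) * (σ * (jA (ee i) * jA x * jA (ee j)) * τ) * jM (E 0 j)
          = (jM (E i 0) * σ * jA (ee i)) * jA x * (jA (ee j) * τ * jM (E 0 j)) := by
            simp only [mul_assoc]
        _ = jM (E i i) * jA x * jM (E j j) := by rw [lv, rv]
        _ = jA (ee i) * jA x * jA (ee j) := by rw [jee, jee]
    obtain ⟨h0, _, h0uniq⟩ := hAp Ap jA jM hcomp1 hcomp2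
    have cA : (Ψ.comp h').comp jA = jA := by
      ext a
      show Ψ (h' (jA a)) = jA a
      rw [h'jA, Ψval]
      simp only [Fin.sum_univ_two, hg1val]
      rw [term_eq, term_eq, term_eq, term_eq, ← map_add, ← map_add, ← map_add]
      apply congrArg
      show e1 * a * e1 + e1 * a * e2 + (e2 * a * e1 + e2 * a * e2) = a
      have ha : (e1 + e2) * a * (e1 + e2) = a := by rw [hsum, one_mul, mul_one]
      conv_rhs => rw [← ha]
      noncomm_ring
    have cM : (Ψ.comp h').comp jM = jM := by
      ext m
      show Ψ (h' (jM m)) = jM m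
      rw [h'jM, Ψval]
      have hsm : ∀ i j : Fin 2, (h (g2 m i j)).1 = m i j • ε := by
        intro i j
        rw [hg2val, Algebra.algebraMap_eq_smul_one, map_smul, CornerRing.val_smul, ψone]
      simp only [Fin.sum_univ_two, hsm, smul_mul_assoc, mul_smul_comm, mid]
      rw [← map_smul, ← map_smul, ← map_smul, ← map_smul,
        ← map_add, ← map_add, ← map_add]
      apply congrArg
      ext l m'
      fin_cases l <;> fin_cases m' <;>
        · simp only [Matrix.add_apply, Matrix.smul_apply, hE, Matrix.single,
            Matrix.of_apply, smul_eq_mul]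
          norm_num
    have cid : ∀ z : Ap, Ψ (h' z) = z := by
      have eq1 := h0uniq (Ψ.comp h') ⟨cA, cM⟩
      have eq2 := h0uniq (AlgHom.id k Ap) ⟨by ext a; rfl, by ext m; rfl⟩
      intro z
      have : (Ψ.comp h') z = (AlgHom.id k Ap) z := by rw [eq1, eq2]
      simpa using this
    apply Set.eq_of_subset_of_subset
    · rintro z ⟨x, rfl⟩
      show ε * (h x).1 * ε = (h x).1
      exact (h x).2
    · intro z hz
      have hz' : ε * z * ε = z := hz
      refine ⟨h' z 0 0, ?_⟩
      rw [ψval]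
      have hval : ∀ i j : Fin 2, h' z i j = if i = 0 ∧ j = 0 then h' z 0 0 else 0 :=
        hcorn z hz'
      have : Ψ (h' z) = z := cid z
      rw [Ψval] at this
      simp only [Fin.sum_univ_two] at this
      rw [hval 0 1, hval 1 0, hval 1 1] at this
      norm_num at this
      calc (h (h' z 0 0)).1
          = ε * (h (h' z 0 0)).1 * ε := ((h (h' z 0 0)).2).symm
        _ = z := this
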